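/- arXiv:1507.00177 — 4 statements merged into one kernel-verified Lean document; each statement's English description precedes it below -/
import Mathlib

section
/- Let F_q be a finite field and let Q be a product of linear polynomials in n variables over F_q such that the linear span of its factors has dimension at most τ. Then there exists a polynomial Q' ∈ F_q[x_1,...,x_n] of total degree at most (q-1)·τ such that Q'(a) = Q(a) for all a ∈ F_q^n. -/
open MvPolynomial

lemma aux_totalDegree_bind₁ {F : Type} [CommSemiring F] {n r : ℕ}
    (B : Fin r → MvPolynomial (Fin n) F) (hB : ∀ i, (B i).totalDegree ≤ 1)
    (P : MvPolynomial (Fin r) F) :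
    (bind₁ B P).totalDegree ≤ P.totalDegree := by
  rw [bind₁, aeval_def, eval₂_eq]
  refine (totalDegree_finset_sum _ _).trans (Finset.sup_le fun d hd => ?_)
  refine (totalDegree_mul _ _).trans ?_
  have h1 : (algebraMap F (MvPolynomial (Fin n) F) (coeff d P)).totalDegree = 0 := by
    simp [totalDegree_C (R := F) (σ := Fin n)]
  rw [h1, zero_add]
  refine (totalDegree_finset_prod _ _).trans ?_
  calc ∑ i ∈ d.support, (B i ^ d i).totalDegree
      ≤ ∑ i ∈ d.support, d i * 1 := by
        refine Finset.sum_le_sum fun i _ => ?_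
        exact (totalDegree_pow _ _).trans (Nat.mul_le_mul_left _ (hB i))
    _ = d.sum fun _ e => e := by simp [Finsupp.sum]
    _ ≤ P.totalDegree := le_totalDegree hd

lemma aux_totalDegree_restrictDegree {F : Type} [CommSemiring F] {r m : ℕ}
    (P : MvPolynomial (Fin r) F) (hP : P ∈ restrictDegree (Fin r) F m) :
    P.totalDegree ≤ m * r := by
  rw [mem_restrictDegree] at hP
  refine Finset.sup_le fun d hd => ?_
  calc (d.sum fun _ e => e) = ∑ i ∈ d.support, d i := rfl
    _ ≤ ∑ i : Fin r, d i := Finset.sum_le_sum_of_subset (Finset.subset_univ _)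
    _ ≤ ∑ _i : Fin r, m := Finset.sum_le_sum fun i _ => hP d hd i
    _ = m * r := by simp [mul_comm]

/-- A product of linear polynomials over `F_q` whose factors span a space of
dimension at most `τ` agrees, as a function on `F_q^n`, with a polynomial of
total degree at most `(q-1)·τ`. -/
theorem stmt_1 {F : Type} [Field F] [Fintype F] {n τ : ℕ}
    {ι : Type} (s : Finset ι) (L : ι → MvPolynomial (Fin n) F)
    (hdeg : ∀ j ∈ s, (L j).totalDegree ≤ 1)
    (hrank : Module.finrank F (Submodule.span F (L '' ↑s)) ≤ τ) :
    ∃ Q' : MvPolynomial (Fin n) F,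
      Q'.totalDegree ≤ (Fintype.card F - 1) * τ ∧
      ∀ a : Fin n → F, eval a Q' = eval a (∏ j ∈ s, L j) := by
  classical
  set V := Submodule.span F (L '' ↑s) with hV
  haveI : FiniteDimensional F V :=
    FiniteDimensional.span_of_finite F (s.finite_toSet.image L)
  set r := Module.finrank F V with hr
  let b : Module.Basis (Fin r) F V := Module.finBasis F V
  let B : Fin r → MvPolynomial (Fin n) F := fun i => (b i : MvPolynomial (Fin n) F)
  have hVdeg : V ≤ restrictTotalDegree (Fin n) F 1 := by
    rw [hV, Submodule.span_le]
    rintro x ⟨j, hj, rfl⟩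
    rw [SetLike.mem_coe, mem_restrictTotalDegree]
    exact hdeg j hj
  have hB : ∀ i, (B i).totalDegree ≤ 1 := fun i => by
    have := hVdeg (b i).2
    rwa [mem_restrictTotalDegree] at this
  have hLmem : ∀ j ∈ s, L j ∈ V := fun j hj =>
    Submodule.subset_span ⟨j, hj, rfl⟩
  let c : ι → Fin r → F := fun j =>
    if h : j ∈ s then (b.repr ⟨L j, hLmem j h⟩ : Fin r →₀ F) else 0
  have hLc : ∀ j ∈ s, L j = ∑ i, c j i • B i := by
    intro j hj
    have := b.sum_repr ⟨L j, hLmem j hj⟩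
    have := congrArg (Subtype.val) this
    simp only [Submodule.coe_sum, SetLike.val_smul] at this
    simp only [c, dif_pos hj]
    exact this.symm
  -- the function to interpolate
  let g : (Fin r → F) → F := fun y => ∏ j ∈ s, ∑ i, c j i * y i
  have := MvPolynomial.map_restrict_dom_evalₗ (K := F) (σ := Fin r)
  have hg : g ∈ (restrictDegree (Fin r) F (Fintype.card F - 1)).map (evalₗ F (Fin r)) := by
    rw [this]; trivial
  obtain ⟨P, hPmem, hPg⟩ := Submodule.mem_map.mp hg
  refine ⟨bind₁ B P, ?_, ?_⟩
  · refine (aux_totalDegree_bind₁ B hB P).trans ?_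
    refine (aux_totalDegree_restrictDegree P hPmem).trans ?_
    exact Nat.mul_le_mul_left _ hrank
  · intro a
    have heval : ∀ {σ : Type} (f : σ → F) (p : MvPolynomial σ F), aeval f p = eval f p :=
      fun f p => by rw [aeval_def, show algebraMap F F = RingHom.id F from rfl, eval₂_id]
    have h1 : eval a (bind₁ B P) = eval (fun i => eval a (B i)) P := by
      have h := aeval_bind₁ (R := F) (S := F) a B P
      rw [heval, heval] at h
      rw [h]
      exact congrArg (fun f => eval f P) (funext fun i => heval a (B i))
    rw [h1]
    have h2 : eval (fun i => eval a (B i)) P = g (fun i => eval a (B i)) := by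
      have := congrFun hPg (fun i => eval a (B i))
      simpa [evalₗ] using this
    rw [h2]
    rw [map_prod]
    refine Finset.prod_congr rfl fun j hj => ?_
    rw [hLc j hj]
    simp [Finset.smul_sum]
end

section
/- Let F be a field, S ⊆ {0,1}^n ⊆ F^n, and 0 ≤ t ≤ n such that every element of S has Hamming weight at most t. Let V be the matrix whose rows are indexed by multilinear monomials of degree at most t in n variables, whose columns are indexed by points a ∈ S, and whose (m, a) entry is the evaluation m(a). Then rank(V) = |S|. -/
/-- The matrix of evaluations of all multilinear monomials of degree at most
`t` at a set `S` of Boolean points of Hamming weight at most `t` has rank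
exactly `|S|`. -/
theorem stmt_7 {F : Type} [Field F] [DecidableEq F] {n t : ℕ}
    (S : Finset (Fin n → F))
    (hS : ∀ a ∈ S, (∀ i, a i = 0 ∨ a i = 1) ∧
      (Finset.univ.filter (fun i => a i = 1)).card ≤ t) :
    Matrix.rank (fun (m : {s : Finset (Fin n) // s.card ≤ t}) (a : S) =>
      ∏ i ∈ m.1, (a : Fin n → F) i) = S.card := by
  classical
  refine (Matrix.rank_transpose (R := F) _).symm.trans ?_
  have h : LinearIndependent F
      (fun (a : S) (m : {s : Finset (Fin n) // s.card ≤ t}) =>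
        ∏ i ∈ m.1, (a : Fin n → F) i) := by
    rw [Fintype.linearIndependent_iff]
    intro g hg
    by_contra hc
    push_neg at hc
    -- set of nonzero coefficients
    set T : Finset S := Finset.univ.filter (fun a => g a ≠ 0) with hT
    have hTne : T.Nonempty := by
      obtain ⟨a, ha⟩ := hc
      exact ⟨a, by simp [hT, ha]⟩
    obtain ⟨a, haT, hamax⟩ := T.exists_max_image
      (fun a : S => (Finset.univ.filter (fun i => (a : Fin n → F) i = 1)).card) hTne
    have haS := hS a a.2
    have hga : g a ≠ 0 := by simpa [hT] using haT
    set sa : Finset (Fin n) := Finset.univ.filter (fun i => (a : Fin n → F) i = 1)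
      with hsa
    have hcard : sa.card ≤ t := haS.2
    have := congrFun hg ⟨sa, hcard⟩
    simp only [Finset.sum_apply, Pi.smul_apply, smul_eq_mul, Pi.zero_apply] at this
    -- evaluate each term
    have key : ∀ b : S, g b * ∏ i ∈ sa, (b : Fin n → F) i = if b = a then g a else 0 := by
      intro b
      by_cases hgb : g b = 0
      · have hba : b ≠ a := fun h => hga (h ▸ hgb)
        simp [hgb, hba]
      · have hbS := hS b b.2
        by_cases hsub : sa ⊆ Finset.univ.filter (fun i => (b : Fin n → F) i = 1)
        · -- product = 1, and b = a by maximality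
          have hcardb := hamax b (by simp [hT, hgb])
          have heq : sa = Finset.univ.filter (fun i => (b : Fin n → F) i = 1) :=
            Finset.eq_of_subset_of_card_le hsub hcardb
          have hba : b = a := by
            apply Subtype.ext
            funext i
            rcases hbS.1 i with h0 | h1
            · rcases haS.1 i with ha0 | ha1
              · rw [h0, ha0]
              · exfalso
                have : i ∈ sa := by simp [hsa, ha1]
                rw [heq] at this
                simp only [Finset.mem_filter] at this
                rw [this.2] at h0
                exact one_ne_zero (α := F) h0
            · have : i ∈ sa := by rw [heq]; simp [h1]
              simp only [hsa, Finset.mem_filter] at this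
              rw [h1, this.2]
          have hprod : ∏ i ∈ sa, (b : Fin n → F) i = 1 := by
            apply Finset.prod_eq_one
            intro i hi
            have := hsub hi
            simp only [Finset.mem_filter] at this
            exact this.2
          rw [hba] at hprod
          simp [hba, hprod]
        · -- product = 0
          obtain ⟨i, hi, hni⟩ := Finset.not_subset.mp hsub
          have hbi : (b : Fin n → F) i = 0 := by
            rcases hbS.1 i with h0 | h1
            · exact h0
            · exact absurd (by simp [h1]) hni
          have hprod : ∏ j ∈ sa, (b : Fin n → F) j = 0 :=
            Finset.prod_eq_zero hi hbi
          have hba : b ≠ a := by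
            intro h
            apply hni
            rw [h]
            exact hi
          simp [hprod, hba]
    rw [Finset.sum_congr rfl (fun b _ => key b)] at this
    simp at this
    exact hga this
  exact h.rank_matrix.trans (Fintype.card_coe S)
end

section
/- Let S ⊆ c + {0,1}^n ⊆ F^n be a subset of a translate of the hypercube, with each element of S of the form c + h with Hamming weight of h at most t. Let V(S) be the evaluation matrix of all multilinear monomials of degree at most t at the points of S, and let V(S − c) be the matrix whose rows are the evaluations of the translated polynomials m(x − c) at the points of S, for each multilinear monomial m of degree at most t. Then rank(V(S)) = rank(V(S − c)) = |S|. -/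
open Finset Matrix

section aux
variable {F : Type} [Field F] {n t : ℕ}

/-- Expansion of a product of sums over subsets, indexed by the subtype of small sets. -/
lemma expand_prod_aux (x y : Fin n → F) (s : Finset (Fin n)) (ht : s.card ≤ t) :
    ∏ i ∈ s, (x i + y i)
      = ∑ u : {s : Finset (Fin n) // s.card ≤ t},
          (if u.1 ⊆ s then ∏ i ∈ s \ u.1, y i else 0) * ∏ i ∈ u.1, x i := by
  classical
  have hmem : ∀ v : Finset (Fin n),
      v ∈ Finset.univ.filter (fun v : Finset (Fin n) => v.card ≤ t) ↔ v.card ≤ t := by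
    intro v; simp
  rw [Finset.prod_add, ← Finset.sum_subtype
    (Finset.univ.filter fun v : Finset (Fin n) => v.card ≤ t) hmem
    (fun v => (if v ⊆ s then ∏ i ∈ s \ v, y i else 0) * ∏ i ∈ v, x i)]
  have hsub : s.powerset ⊆ Finset.univ.filter (fun v : Finset (Fin n) => v.card ≤ t) := by
    intro v hv
    rw [Finset.mem_powerset] at hv
    rw [hmem]
    exact (Finset.card_le_card hv).trans ht
  have hzero : ∀ v ∈ Finset.univ.filter (fun v : Finset (Fin n) => v.card ≤ t),
      v ∉ s.powerset →
      (if v ⊆ s then ∏ i ∈ s \ v, y i else 0) * ∏ i ∈ v, x i = 0 := by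
    intro v _ hv
    rw [Finset.mem_powerset] at hv
    rw [if_neg hv, zero_mul]
  rw [← Finset.sum_subset hsub hzero]
  apply Finset.sum_congr rfl
  intro v hv
  rw [Finset.mem_powerset] at hv
  rw [if_pos hv, mul_comm]

end aux

/-- For `S ⊆ c + {0,1}^n` with each point of the form `c + h`, `h` of Hamming
weight at most `t`: both the matrix of evaluations of multilinear monomials of
degree at most `t` at the points of `S`, and the matrix of evaluations of
their translates `m(x - c)`, have rank exactly `|S|`. -/
theorem stmt_8 {F : Type} [Field F] [DecidableEq F] {n t : ℕ} (c : Fin n → F)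
    (S : Finset (Fin n → F))
    (hS : ∀ a ∈ S, (∀ i, a i - c i = 0 ∨ a i - c i = 1) ∧
      (Finset.univ.filter (fun i => a i - c i = 1)).card ≤ t) :
    Matrix.rank (fun (m : {s : Finset (Fin n) // s.card ≤ t}) (a : S) =>
        ∏ i ∈ m.1, (a : Fin n → F) i) = S.card ∧
    Matrix.rank (fun (m : {s : Finset (Fin n) // s.card ≤ t}) (a : S) =>
        ∏ i ∈ m.1, ((a : Fin n → F) i - c i)) = S.card := by
  classical
  set α := {s : Finset (Fin n) // s.card ≤ t} with hα
  set D : (Fin n → F) → Finset (Fin n) :=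
    fun a => Finset.univ.filter (fun i => a i - c i = 1) with hD
  set T : Matrix α S F := fun m a => ∏ i ∈ m.1, ((a : Fin n → F) i - c i) with hT
  set M : Matrix α S F := fun m a => ∏ i ∈ m.1, (a : Fin n → F) i with hM
  -- entries of T are 0/1 indicators of containment in the support
  have hTval : ∀ (m : α) (a : S), T m a = if m.1 ⊆ D a.1 then 1 else 0 := by
    intro m a
    by_cases h : m.1 ⊆ D a.1
    · rw [if_pos h]
      apply Finset.prod_eq_one
      intro i hi
      have := h hi
      simp only [hD, Finset.mem_filter] at this
      exact this.2
    · rw [if_neg h]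
      obtain ⟨i, hi, hni⟩ := Finset.not_subset.mp h
      apply Finset.prod_eq_zero hi
      simp only [hD, Finset.mem_filter, Finset.mem_univ, true_and] at hni
      rcases (hS a.1 a.2).1 i with h0 | h1
      · exact h0
      · exact absurd h1 hni
  -- D is injective on S
  have hDinj : ∀ a b : S, D a.1 = D b.1 → a = b := by
    intro a b hab
    ext i
    have hmem : (i ∈ D a.1) = (i ∈ D b.1) := by rw [hab]
    simp only [hD, Finset.mem_filter, Finset.mem_univ, true_and, eq_iff_iff] at hmem
    rcases (hS a.1 a.2).1 i with h0a | h1a <;> rcases (hS b.1 b.2).1 i with h0b | h1b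
    · have : a.1 i - c i = b.1 i - c i := by rw [h0a, h0b]
      exact sub_left_injective this
    · exact absurd (h0a.symm.trans (hmem.mpr h1b)) zero_ne_one
    · exact absurd ((hmem.mp h1a).symm.trans h0b) one_ne_zero
    · have : a.1 i - c i = b.1 i - c i := by rw [h1a, h1b]
      exact sub_left_injective this
  -- row selection
  set r : S → α := fun a => ⟨D a.1, (hS a.1 a.2).2⟩ with hr
  set B : Matrix S S F := T.submatrix r id with hB
  have hBval : ∀ a b : S, B a b = if D a.1 ⊆ D b.1 then 1 else 0 := by
    intro a b; rw [hB]; exact hTval (r a) b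
  -- B is block triangular w.r.t. support size
  have hBT : B.BlockTriangular (fun a : S => (D a.1).card) := by
    intro a b hab
    rw [hBval]
    rw [if_neg]
    intro hsub
    exact absurd (Finset.card_le_card hsub) (not_le.mpr hab)
  have hdet : B.det = 1 := by
    rw [hBT.det]
    apply Finset.prod_eq_one
    intro k _
    have h1 : B.toSquareBlock (fun a : S => (D a.1).card) k = 1 := by
      ext a b
      simp only [Matrix.toSquareBlock_def, Matrix.of_apply]
      by_cases hab : a = b
      · subst hab
        rw [hBval, if_pos (Finset.Subset.refl _), Matrix.one_apply_eq]
      · rw [hBval, if_neg, Matrix.one_apply_ne hab]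
        intro hsub
        have hcard : (D (a.1 : S).1).card = (D (b.1 : S).1).card := by rw [a.2, b.2]
        have heq := Finset.eq_of_subset_of_card_le hsub hcard.ge
        exact hab (Subtype.ext (hDinj a.1 b.1 heq))
    rw [h1, Matrix.det_one]
  have hBunit : IsUnit B := by
    apply (Matrix.isUnit_iff_isUnit_det B).mpr
    rw [hdet]; exact isUnit_one
  have hBrank : B.rank = S.card := by
    rw [Matrix.rank_of_isUnit B hBunit, Fintype.card_coe]
  -- B = P * T for a selection matrix, so rank B ≤ rank T
  set P : Matrix S α F := fun b m => if m = r b then 1 else 0 with hP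
  have hPT : B = P * T := by
    ext a b
    rw [Matrix.mul_apply]
    simp only [hP, ite_mul, one_mul, zero_mul]
    rw [Finset.sum_ite_eq' Finset.univ (r a) (fun m => T m b)]
    simp [hB]
  have hTrank : T.rank = S.card := by
    apply le_antisymm
    · exact (Matrix.rank_le_card_width T).trans_eq (Fintype.card_coe S)
    · rw [← hBrank, hPT]; exact Matrix.rank_mul_le_right P T
  -- T = L * M with L the expansion matrix
  set L : Matrix α α F := fun s u => if u.1 ⊆ s.1 then ∏ i ∈ s.1 \ u.1, (-(c i)) else 0 with hL
  have hLM : T = L * M := by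
    ext m a
    rw [Matrix.mul_apply]
    show (∏ i ∈ m.1, ((a : Fin n → F) i - c i)) = ∑ u : α, L m u * M u a
    calc (∏ i ∈ m.1, ((a : Fin n → F) i - c i))
        = ∏ i ∈ m.1, ((a : Fin n → F) i + (-(c i))) := by
          apply Finset.prod_congr rfl; intro i _; ring
      _ = ∑ u : α, (if u.1 ⊆ m.1 then ∏ i ∈ m.1 \ u.1, (-(c i)) else 0)
            * ∏ i ∈ u.1, (a : Fin n → F) i :=
          expand_prod_aux _ _ m.1 m.2
      _ = ∑ u : α, L m u * M u a := rfl
  have hMrank : M.rank = S.card := by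
    apply le_antisymm
    · exact (Matrix.rank_le_card_width M).trans_eq (Fintype.card_coe S)
    · rw [← hTrank, hLM]; exact Matrix.rank_mul_le_right L M
  exact ⟨hMrank, hTrank⟩
end

section
/- For the Nisan–Wigderson polynomial NW_{d,m,e}, any two distinct monomials appearing in it agree in at most e−1 of the d coordinate blocks; consequently, any nonzero k-th order partial derivative of NW_{d,m,e} with respect to distinct variables x_{1,a_1},...,x_{k,a_k} has exactly m^{e−k} monomials (for k ≤ e), and any two distinct monomials of such a derivative agree in at most e−k−1 additional blocks. -/
open MvPolynomial

def polyEval {K : Type} [Field K] {e : ℕ} (c : Fin e → K) (x : K) : K :=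
  ∑ j : Fin e, c j * x ^ (j : ℕ)

section lemmas
variable {K : Type} [Field K] [DecidableEq K] {e : ℕ}

noncomputable def coeffPoly (c : Fin e → K) : Polynomial K :=
  ∑ j : Fin e, Polynomial.C (c j) * Polynomial.X ^ (j : ℕ)

lemma polyEval_eq_eval (c : Fin e → K) (x : K) :
    polyEval c x = (coeffPoly c).eval x := by
  simp [polyEval, coeffPoly, Polynomial.eval_finset_sum]

lemma coeffPoly_coeff (c : Fin e → K) (n : ℕ) :
    (coeffPoly c).coeff n = if h : n < e then c ⟨n, h⟩ else 0 := by
  rw [coeffPoly, Polynomial.finset_sum_coeff]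
  simp only [Polynomial.coeff_C_mul, Polynomial.coeff_X_pow]
  split
  · next h =>
    rw [Finset.sum_eq_single (⟨n, h⟩ : Fin e)]
    · simp
    · intro j _ hj
      simp only [mul_ite, mul_one, mul_zero, ite_eq_right_iff]
      intro hnj
      exact absurd (Fin.ext hnj.symm : j = ⟨n, h⟩) hj
    · simp
  · next h =>
    apply Finset.sum_eq_zero
    intro j _
    simp only [mul_ite, mul_one, mul_zero, ite_eq_right_iff]
    intro hnj
    exact absurd (hnj ▸ j.isLt) h

lemma coeffPoly_degree_lt (c : Fin e → K) : (coeffPoly c).degree < e := by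
  apply lt_of_le_of_lt (Polynomial.degree_sum_le _ _)
  rcases Nat.eq_zero_or_pos e with rfl | he
  · simp
  apply Finset.sup_lt_iff (by exact_mod_cast WithBot.bot_lt_coe e) |>.mpr
  intro j _
  apply lt_of_le_of_lt (Polynomial.degree_C_mul_X_pow_le (j:ℕ) (c j))
  exact_mod_cast j.isLt

lemma part1_aux {d : ℕ} (ι : Fin d → K) (hι : Function.Injective ι)
    {c c' : Fin e → K} (h : c ≠ c') :
    (Finset.univ.filter (fun i : Fin d =>
      polyEval c (ι i) = polyEval c' (ι i))).card ≤ e - 1 := by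
  rcases Nat.eq_zero_or_pos e with rfl | he0
  · exact absurd (Subsingleton.elim c c') h
  set q := coeffPoly c - coeffPoly c' with hq
  have hq0 : q ≠ 0 := by
    intro h0
    apply h
    funext j
    have := congrArg (fun p => Polynomial.coeff p (j : ℕ)) h0
    simp only [hq, Polynomial.coeff_sub, Polynomial.coeff_zero, sub_eq_zero,
      coeffPoly_coeff] at this
    simpa using this
  have hdeg : q.natDegree ≤ e - 1 := by
    have : q.degree < e := lt_of_le_of_lt (Polynomial.degree_sub_le _ _)
      (max_lt (coeffPoly_degree_lt c) (coeffPoly_degree_lt c'))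
    have := Polynomial.natDegree_lt_iff_degree_lt hq0 |>.mpr (by exact_mod_cast this)
    omega
  have hsub : (Finset.univ.filter (fun i : Fin d =>
      polyEval c (ι i) = polyEval c' (ι i))).image ι ⊆ q.roots.toFinset := by
    intro x hx
    simp only [Finset.mem_image, Finset.mem_filter] at hx
    obtain ⟨i, ⟨_, hi⟩, rfl⟩ := hx
    rw [Multiset.mem_toFinset, Polynomial.mem_roots hq0]
    simp [hq, Polynomial.IsRoot, ← polyEval_eq_eval, hi, sub_eq_zero]
  calc (Finset.univ.filter _).card
      = ((Finset.univ.filter (fun i : Fin d =>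
        polyEval c (ι i) = polyEval c' (ι i))).image ι).card :=
        (Finset.card_image_of_injective _ hι).symm
    _ ≤ q.roots.toFinset.card := Finset.card_le_card hsub
    _ ≤ Multiset.card q.roots := Multiset.toFinset_card_le _
    _ ≤ q.natDegree := q.card_roots'
    _ ≤ e - 1 := hdeg

end lemmas

section count
variable {K : Type} [Field K] [Fintype K] [DecidableEq K] {e k : ℕ}

noncomputable def evalMap (e : ℕ) (pts : Fin k → K) : (Fin e → K) →ₗ[K] (Fin k → K) where
  toFun c := fun i => polyEval c (pts i)
  map_add' c c' := by
    funext i; simp [polyEval, add_mul, Finset.sum_add_distrib]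
  map_smul' r c := by
    funext i; simp [polyEval, Finset.mul_sum, mul_assoc]

lemma evalMap_surjective (hk : k ≤ e) (pts : Fin k → K) (hpts : Function.Injective pts) :
    Function.Surjective (evalMap e pts) := by
  intro b
  set P := Lagrange.interpolate Finset.univ pts b with hP
  have hdeg : P.natDegree < e ∨ P = 0 := by
    rcases eq_or_ne P 0 with h0 | h0
    · exact Or.inr h0
    left
    have hd : P.degree < k := by
      have h := Lagrange.degree_interpolate_lt (s := Finset.univ) (v := pts) (r := b)
        (Set.injOn_of_injective hpts)
      rwa [Finset.card_univ, Fintype.card_fin] at h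
    have := (Polynomial.natDegree_lt_iff_degree_lt h0).mpr
      (lt_of_lt_of_le hd (by exact_mod_cast hk))
    exact this
  refine ⟨fun j => P.coeff (j : ℕ), ?_⟩
  funext i
  have hev : polyEval (fun j : Fin e => P.coeff (j : ℕ)) (pts i) = P.eval (pts i) := by
    rcases hdeg with hd | h0
    · rw [polyEval, Fin.sum_univ_eq_sum_range (fun j => P.coeff j * pts i ^ j),
        Polynomial.eval_eq_sum_range' (lt_of_lt_of_le hd le_rfl)]
    · simp [h0, polyEval]
  show polyEval _ (pts i) = b i
  rw [hev, hP, Lagrange.eval_interpolate_at_node b (Set.injOn_of_injective hpts)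
    (Finset.mem_univ i)]

lemma count_fiber (hk : k ≤ e) (pts : Fin k → K) (hpts : Function.Injective pts)
    (a : Fin k → K) :
    (Finset.univ.filter (fun c : Fin e → K =>
      ∀ i : Fin k, polyEval c (pts i) = a i)).card = Fintype.card K ^ (e - k) := by
  classical
  obtain ⟨c₀, hc₀⟩ := evalMap_surjective hk pts hpts a
  have hker : Module.finrank K (LinearMap.ker (evalMap e pts)) = e - k := by
    have h1 := (evalMap e pts).finrank_range_add_finrank_ker
    have h2 : Module.finrank K (LinearMap.range (evalMap e pts)) = k := by
      rw [LinearMap.range_eq_top.mpr (evalMap_surjective hk pts hpts)]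
      simp [Module.finrank_pi]
    rw [h2, Module.finrank_pi] at h1
    simp at h1
    omega
  have hcardker : Fintype.card (LinearMap.ker (evalMap e pts)) =
      Fintype.card K ^ (e - k) := by
    rw [Module.card_eq_pow_finrank (K := K), hker]
  rw [← hcardker]
  rw [← Fintype.card_subtype]
  apply Fintype.card_congr
  refine ⟨fun c => ⟨c.1 - c₀, ?_⟩, fun z => ⟨z.1 + c₀, ?_⟩, ?_, ?_⟩
  · have : evalMap e pts c.1 = a := funext c.2
    simp [LinearMap.mem_ker, map_sub, this, hc₀]
  · intro i
    have hz := z.2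
    rw [LinearMap.mem_ker] at hz
    have : evalMap e pts (z.1 + c₀) = a := by rw [map_add, hz, hc₀]; simp
    exact congrFun this i
  · intro c; ext : 1; simp
  · intro z; ext : 1; simp
end count
open MvPolynomial

section deriv
variable {K : Type} [CommRing K] {σ : Type} [DecidableEq σ]

lemma prod_X_eq_monomial {α : Type} (s : Finset α) (f : α → σ) :
    (∏ i ∈ s, (X (f i) : MvPolynomial σ K)) =
      monomial (∑ i ∈ s, Finsupp.single (f i) 1) 1 := by
  classical
  induction s using Finset.induction_on with
  | empty => simp
  | insert _ _ hx ih =>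
    rw [Finset.prod_insert hx, Finset.sum_insert hx, ih, X, monomial_mul, one_mul]

lemma listsum_single_apply_of_not_mem (L : List σ) (v : σ) (hv : v ∉ L) :
    ((L.map (fun w => Finsupp.single w (1:ℕ))).sum) v = 0 := by
  induction L with
  | nil => simp
  | cons w L ih =>
    simp only [List.map_cons, List.sum_cons, Finsupp.add_apply]
    rw [Finsupp.single_apply, if_neg (by rintro rfl; exact hv List.mem_cons_self),
      ih (fun h => hv (List.mem_cons_of_mem _ h))]

lemma foldr_pderiv_monomial (L : List σ) (hL : L.Nodup) (s : σ →₀ ℕ)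
    (hs : ∀ v, s v ≤ 1) :
    L.foldr (fun v p => pderiv v p) (monomial s (1:K)) =
      if ∀ v ∈ L, s v = 1 then
        monomial (s - (L.map (fun w => Finsupp.single w (1:ℕ))).sum) 1 else 0 := by
  induction L with
  | nil => simp
  | cons v L ih =>
    have hvL : v ∉ L := (List.nodup_cons.mp hL).1
    have hLn : L.Nodup := (List.nodup_cons.mp hL).2
    rw [List.foldr_cons, ih hLn]
    by_cases hall : ∀ w ∈ L, s w = 1
    · rw [if_pos hall]
      have hTv : ((L.map (fun w => Finsupp.single w (1:ℕ))).sum) v = 0 :=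
        listsum_single_apply_of_not_mem L v hvL
      rw [pderiv_monomial]
      have happ : (s - (L.map (fun w => Finsupp.single w (1:ℕ))).sum) v = s v := by
        rw [Finsupp.tsub_apply, hTv, Nat.sub_zero]
      by_cases hv : s v = 1
      · rw [if_pos (by
          intro w hw
          rcases List.mem_cons.mp hw with rfl | hw
          · exact hv
          · exact hall w hw)]
        rw [happ, hv]
        congr 1
        · rw [tsub_tsub, List.map_cons, List.sum_cons, add_comm]
        · norm_num
      · rw [if_neg (by intro hc; exact hv (hc v List.mem_cons_self))]
        have : s v = 0 := by have := hs v; omega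
        rw [happ, this]
        simp
    · rw [if_neg hall, if_neg (by intro hc; exact hall fun w hw => hc w (List.mem_cons_of_mem _ hw))]
      simp

lemma foldr_pderiv_sum {α : Type} (L : List σ) (t : Finset α) (f : α → MvPolynomial σ K) :
    L.foldr (fun v p => pderiv v p) (∑ c ∈ t, f c) =
      ∑ c ∈ t, L.foldr (fun v p => pderiv v p) (f c) := by
  induction L with
  | nil => simp
  | cons v L ih =>
    rw [List.foldr_cons, ih, map_sum]
    rfl

end deriv
open MvPolynomial

section misc
variable {K : Type} [DecidableEq K] {d : ℕ}

lemma sum_single_pair_apply (v : Fin d → K) (j : Fin d) (b : K) :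
    (∑ i : Fin d, Finsupp.single ((i, v i) : Fin d × K) (1:ℕ)) (j, b)
      = if v j = b then 1 else 0 := by
  classical
  rw [Finsupp.finset_sum_apply, Finset.sum_eq_single j]
  · rw [Finsupp.single_apply]
    by_cases h : v j = b
    · rw [if_pos h, if_pos (by rw [h])]
    · rw [if_neg h, if_neg (by simp [Prod.ext_iff]; intro hb; exact h hb)]
  · intro i _ hij
    rw [Finsupp.single_apply, if_neg (by simp [Prod.ext_iff]; intro h; exact absurd h hij)]
  · simp

lemma support_sum_monomial_injOn {σ L : Type} [DecidableEq σ] [CommRing L] [Nontrivial L] {α : Type}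
    [DecidableEq α] (S : Finset α) (t : α → (σ →₀ ℕ)) (ht : Set.InjOn t S) :
    (∑ c ∈ S, (monomial (t c) (1:L))).support = S.image t := by
  classical
  ext m
  rw [MvPolynomial.mem_support_iff, MvPolynomial.coeff_sum]
  simp only [MvPolynomial.coeff_monomial]
  constructor
  · intro h
    by_contra hm
    apply h
    apply Finset.sum_eq_zero
    intro c hc
    rw [if_neg]
    intro hcm
    exact hm (Finset.mem_image.mpr ⟨c, hc, hcm⟩)
  · intro hm
    obtain ⟨c₀, hc₀, hc₀m⟩ := Finset.mem_image.mp hm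
    rw [Finset.sum_eq_single_of_mem c₀ hc₀]
    · rw [if_pos hc₀m]; exact one_ne_zero
    · intro c hc hne
      rw [if_neg]
      intro hcm
      exact hne (ht hc hc₀ (hcm.trans hc₀m.symm))
end misc
/-- Properties of the Nisan–Wigderson polynomial
`NW = Σ_{p : deg p < e} Π_i X_{(i, p(ι i))}` (monomials indexed by coefficient
vectors `c : Fin e → K` of polynomials of degree `< e` over the finite field
`K`, evaluated at `d` distinct points `ι i`):
1. two distinct monomials agree in at most `e - 1` of the `d` blocks;
2. the `k`-th order partial derivative with respect to the distinct variables
   `(1, a_1), ..., (k, a_k)` (for `k ≤ e`) has exactly `|K|^{e-k}` monomials;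
3. two distinct monomials of such a derivative agree in at most `e - k - 1`
   of the remaining blocks. -/
theorem stmt_15 {K : Type} [Field K] [Fintype K] [DecidableEq K]
    {d e k : ℕ} (he : e ≤ d) (hk : k ≤ e)
    (ι : Fin d → K) (hι : Function.Injective ι) (a : Fin k → K) :
    (∀ c c' : Fin e → K, c ≠ c' →
      (Finset.univ.filter (fun i : Fin d =>
        polyEval c (ι i) = polyEval c' (ι i))).card ≤ e - 1) ∧
    ((List.ofFn (fun i : Fin k =>
        ((Fin.castLE (hk.trans he) i, a i) : Fin d × K))).foldr
        (fun v p => pderiv v p)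
        (∑ c : Fin e → K, ∏ i : Fin d,
          (X (i, polyEval c (ι i)) : MvPolynomial (Fin d × K) K))).support.card
      = Fintype.card K ^ (e - k) ∧
    (∀ c c' : Fin e → K,
      (∀ i : Fin k, polyEval c (ι (Fin.castLE (hk.trans he) i)) = a i) →
      (∀ i : Fin k, polyEval c' (ι (Fin.castLE (hk.trans he) i)) = a i) →
      c ≠ c' →
      (Finset.univ.filter (fun i : Fin d => k ≤ (i : ℕ) ∧
        polyEval c (ι i) = polyEval c' (ι i))).card ≤ e - k - 1) := by
  have hkd : k ≤ e := hk
  have hkdd : k ≤ d := hk.trans he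
  have hptsinj : Function.Injective (fun i : Fin k => ι (Fin.castLE (hk.trans he) i)) :=
    fun i j h => Fin.castLE_injective hkdd (hι h)
  have part1 : ∀ c c' : Fin e → K, c ≠ c' →
      (Finset.univ.filter (fun i : Fin d =>
        polyEval c (ι i) = polyEval c' (ι i))).card ≤ e - 1 :=
    fun c c' h => part1_aux ι hι h
  refine ⟨part1, ?_, ?_⟩
  · -- part 2
    set f : Fin k → Fin d × K := fun i => (Fin.castLE (hk.trans he) i, a i) with hf
    set sc : (Fin e → K) → ((Fin d × K) →₀ ℕ) :=
      fun c => ∑ i : Fin d, Finsupp.single ((i, polyEval c (ι i)) : Fin d × K) 1 with hsc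
    have hscapp : ∀ (c : Fin e → K) (j : Fin d) (b : K),
        sc c (j, b) = if polyEval c (ι j) = b then 1 else 0 :=
      fun c j b => sum_single_pair_apply _ j b
    have hs1 : ∀ (c : Fin e → K) (v : Fin d × K), sc c v ≤ 1 := by
      rintro c ⟨j, b⟩
      rw [hscapp]
      split <;> omega
    have hLnodup : (List.ofFn f).Nodup :=
      List.nodup_ofFn.mpr (fun i j h => Fin.castLE_injective hkdd (congrArg Prod.fst h))
    have hbody : (∑ c : Fin e → K, ∏ i : Fin d,
        (X (i, polyEval c (ι i)) : MvPolynomial (Fin d × K) K))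
        = ∑ c : Fin e → K, monomial (sc c) 1 :=
      Finset.sum_congr rfl fun c _ => prod_X_eq_monomial _ _
    rw [hbody, foldr_pderiv_sum]
    set T : (Fin d × K) →₀ ℕ :=
      ((List.ofFn f).map (fun w => Finsupp.single w (1:ℕ))).sum with hT
    have hTzero : ∀ (j : Fin d) (b : K), k ≤ (j:ℕ) → T (j, b) = 0 := by
      intro j b hj
      apply listsum_single_apply_of_not_mem
      intro hmem
      rw [List.mem_ofFn] at hmem
      obtain ⟨i, hi⟩ := hmem
      have h1 : ((Fin.castLE hkdd i : Fin d) : ℕ) = (j : ℕ) :=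
        congrArg (fun p : Fin d × K => ((p.1 : Fin d) : ℕ)) hi
      have h2 : (i : ℕ) < k := i.isLt
      simp only [Fin.coe_castLE] at h1
      omega
    have hder : ∀ c : Fin e → K,
        (List.ofFn f).foldr (fun v p => pderiv v p) (monomial (sc c) (1:K)) =
        if (∀ i : Fin k, polyEval c (ι (Fin.castLE (hk.trans he) i)) = a i) then
          monomial (sc c - T) 1 else 0 := by
      intro c
      rw [foldr_pderiv_monomial _ hLnodup _ (hs1 c)]
      have hcond : (∀ v ∈ List.ofFn f, sc c v = 1) ↔
          (∀ i : Fin k, polyEval c (ι (Fin.castLE (hk.trans he) i)) = a i) := by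
        rw [List.forall_mem_ofFn_iff]
        apply forall_congr'
        intro i
        show sc c (Fin.castLE (hk.trans he) i, a i) = 1 ↔ _
        rw [hscapp]
        split
        · next h => simp [h]
        · next h => simp [h]
      rw [← hT]
      simp only [hcond]
    rw [Finset.sum_congr rfl (fun c _ => hder c), ← Finset.sum_filter]
    set S := Finset.univ.filter (fun c : Fin e → K =>
      ∀ i : Fin k, polyEval c (ι (Fin.castLE (hk.trans he) i)) = a i) with hS
    have hinj : Set.InjOn (fun c => sc c - T) S := by
      intro c hc c' hc' hEq
      by_contra hne
      have hA := part1 c c' hne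
      have he1 : 1 ≤ e := by
        rcases Nat.eq_zero_or_pos e with rfl | h
        · exact absurd (Subsingleton.elim c c') hne
        · exact h
      have hex : ∃ i : Fin d, k ≤ (i:ℕ) ∧ polyEval c (ι i) ≠ polyEval c' (ι i) := by
        by_contra hno
        push_neg at hno
        have hall : ∀ i : Fin d, polyEval c (ι i) = polyEval c' (ι i) := by
          intro i
          by_cases hi : (i:ℕ) < k
          · have hic : Fin.castLE hkdd ⟨(i:ℕ), hi⟩ = i := Fin.ext rfl
            have h1 := (Finset.mem_filter.mp hc).2 ⟨(i:ℕ), hi⟩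
            have h2 := (Finset.mem_filter.mp hc').2 ⟨(i:ℕ), hi⟩
            rw [hic] at h1 h2
            rw [h1, h2]
          · exact hno i (not_lt.mp hi)
        have hcard : (Finset.univ.filter (fun i : Fin d =>
            polyEval c (ι i) = polyEval c' (ι i))).card = d := by
          rw [Finset.filter_true_of_mem (fun i _ => hall i), Finset.card_univ,
            Fintype.card_fin]
        omega
      obtain ⟨i, hik, hiv⟩ := hex
      have h1 : (sc c - T) (i, polyEval c (ι i)) = 1 := by
        rw [Finsupp.tsub_apply, hTzero i _ hik, Nat.sub_zero, hscapp, if_pos rfl]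
      have h2 : (sc c' - T) (i, polyEval c (ι i)) = 0 := by
        rw [Finsupp.tsub_apply, hTzero i _ hik, Nat.sub_zero, hscapp,
          if_neg (fun h => hiv h.symm)]
      have hEq' : sc c - T = sc c' - T := hEq
      rw [hEq'] at h1
      rw [h1] at h2
      exact one_ne_zero h2
    rw [support_sum_monomial_injOn S _ hinj, Finset.card_image_of_injOn hinj]
    exact count_fiber hk _ hptsinj a
  · -- part 3
    intro c c' hc hc' hne
    have hA := part1 c c' hne
    set B := Finset.univ.filter (fun i : Fin d => k ≤ (i : ℕ) ∧
      polyEval c (ι i) = polyEval c' (ι i)) with hB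
    set Bk := (Finset.univ : Finset (Fin k)).image (Fin.castLE hkdd) with hBk
    have hBkcard : Bk.card = k := by
      rw [hBk, Finset.card_image_of_injective _ (Fin.castLE_injective hkdd)]
      simp
    have hBsub : B ⊆ Finset.univ.filter (fun i : Fin d =>
        polyEval c (ι i) = polyEval c' (ι i)) := by
      intro i hi
      exact Finset.mem_filter.mpr ⟨Finset.mem_univ i, (Finset.mem_filter.mp hi).2.2⟩
    have hBksub : Bk ⊆ Finset.univ.filter (fun i : Fin d =>
        polyEval c (ι i) = polyEval c' (ι i)) := by
      intro i hi
      obtain ⟨j, _, rfl⟩ := Finset.mem_image.mp hi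
      exact Finset.mem_filter.mpr ⟨Finset.mem_univ _, (hc j).trans (hc' j).symm⟩
    have hdisj : Disjoint B Bk := by
      rw [Finset.disjoint_left]
      intro i hiB hiBk
      obtain ⟨j, _, rfl⟩ := Finset.mem_image.mp hiBk
      have h1 := (Finset.mem_filter.mp hiB).2.1
      have h2 : ((Fin.castLE hkdd j : Fin d) : ℕ) < k := by
        simp [Fin.coe_castLE]
      omega
    have hcard : B.card + k = (B ∪ Bk).card := by
      rw [Finset.card_union_of_disjoint hdisj, hBkcard]
    have hle : (B ∪ Bk).card ≤ e - 1 :=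
      le_trans (Finset.card_le_card (Finset.union_subset hBsub hBksub)) hA
    omega
end
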